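/- In the rank-one update setting, under the generic assumptions and with ρ ≠ 0: no eigenvalue of L̃ = L + ρ v vᵀ equals any λ_i; L̃ has n pairwise distinct eigenvalues λ̃_1 < … < λ̃_n; and, setting w_j = (diag(λ) − λ̃_j I)^{-1} z (so (w_j)_i = z_i/(λ_i − λ̃_j)) and ũ_j = U w_j / ‖w_j‖₂, the vectors ũ_1,…,ũ_n form an orthonormal eigenbasis of L̃ with L̃ ũ_j = λ̃_j ũ_j. Equivalently, the matrix Ũ with columns ũ_1,…,ũ_n satisfies Ũᵀ = diag(s) C̄(λ̃, λ) diag(t) Uᵀ, where s_j = −1/‖w_j‖₂, t_i = z_i, and C̄(λ̃, λ) is the Cauchy matrix with entries C̄_{ji} = 1/(λ̃_j − λ_i). -/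

import Mathlib

open Matrix Finset

open Filter Topology

noncomputable def secf {m : ℕ} (ρ : ℝ) (lam z : Fin m → ℝ) (μ : ℝ) : ℝ :=
  1 + ρ * ∑ i, z i ^ 2 / (lam i - μ)

lemma ivt_root {f : ℝ → ℝ} {a b p q : ℝ} (hp : p ∈ Set.Ioo a b) (hq : q ∈ Set.Ioo a b)
    (hfp : f p < 0) (hfq : 0 < f q)
    (hf : ContinuousOn f (Set.Ioo a b)) : ∃ x ∈ Set.Ioo a b, f x = 0 := by
  rcases lt_trichotomy p q with h | h | h
  · have hsub : Set.Icc p q ⊆ Set.Ioo a b := fun x hx =>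
      ⟨lt_of_lt_of_le hp.1 hx.1, lt_of_le_of_lt hx.2 hq.2⟩
    obtain ⟨x, hx, hfx⟩ := intermediate_value_Icc h.le (hf.mono hsub) ⟨hfp.le, hfq.le⟩
    exact ⟨x, hsub hx, hfx⟩
  · subst h; linarith
  · have hsub : Set.Icc q p ⊆ Set.Ioo a b := fun x hx =>
      ⟨lt_of_lt_of_le hq.1 hx.1, lt_of_le_of_lt hx.2 hp.2⟩
    obtain ⟨x, hx, hfx⟩ := intermediate_value_Icc' h.le (hf.mono hsub) ⟨hfp.le, hfq.le⟩
    exact ⟨x, hsub hx, hfx⟩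

lemma secf_continuousAt {m : ℕ} (ρ : ℝ) (lam z : Fin m → ℝ) {x : ℝ} (hx : ∀ i, lam i ≠ x) :
    ContinuousAt (secf ρ lam z) x := by
  unfold secf
  refine continuousAt_const.add (continuousAt_const.mul ?_)
  have : ∀ i : Fin m, ContinuousAt (fun μ => z i ^ 2 / (lam i - μ)) x := fun i =>
    continuousAt_const.div (continuous_const.sub continuous_id).continuousAt
      (sub_ne_zero.2 (hx i))
  exact tendsto_finset_sum _ fun i _ => (this i)

lemma tendsto_inv_zero_atBot' : Tendsto (fun x : ℝ => x⁻¹) (𝓝[<] (0:ℝ)) atBot := by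
  have h1 : Tendsto (fun x : ℝ => -x) (𝓝[<] (0:ℝ)) (𝓝[>] (0:ℝ)) := by
    rw [tendsto_nhdsWithin_iff]
    constructor
    · simpa using (continuous_neg.tendsto (0:ℝ)).mono_left nhdsWithin_le_nhds
    · filter_upwards [self_mem_nhdsWithin] with x hx
      simpa using hx
  have h2 := tendsto_inv_nhdsGT_zero.comp h1
  have h3 := tendsto_neg_atTop_atBot.comp h2
  refine h3.congr fun x => ?_
  simp [Function.comp, inv_neg]

lemma pole_right (a : ℝ) : Tendsto (fun μ => (a - μ)⁻¹) (𝓝[>] a) atBot := by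
  refine tendsto_inv_zero_atBot'.comp ?_
  rw [tendsto_nhdsWithin_iff]
  constructor
  · have h : Tendsto (fun μ : ℝ => a - μ) (𝓝 a) (𝓝 (a - a)) :=
      (continuous_const.sub continuous_id).tendsto a
    rw [sub_self] at h
    exact h.mono_left nhdsWithin_le_nhds
  · filter_upwards [self_mem_nhdsWithin] with x hx
    simp only [Set.mem_Iio, sub_neg]
    exact hx

lemma pole_left (a : ℝ) : Tendsto (fun μ => (a - μ)⁻¹) (𝓝[<] a) atTop := by
  refine tendsto_inv_nhdsGT_zero.comp ?_
  rw [tendsto_nhdsWithin_iff]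
  constructor
  · have h : Tendsto (fun μ : ℝ => a - μ) (𝓝 a) (𝓝 (a - a)) :=
      (continuous_const.sub continuous_id).tendsto a
    rw [sub_self] at h
    exact h.mono_left nhdsWithin_le_nhds
  · filter_upwards [self_mem_nhdsWithin] with x hx
    simp only [Set.mem_Ioi, sub_pos]
    exact hx

lemma secf_split {m : ℕ} (ρ : ℝ) (lam z : Fin m → ℝ) (j : Fin m) (μ : ℝ) :
    secf ρ lam z μ =
      (1 + ρ * ∑ i ∈ univ.erase j, z i ^ 2 / (lam i - μ))
        + (ρ * z j ^ 2) * (lam j - μ)⁻¹ := by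
  unfold secf
  rw [← Finset.add_sum_erase _ _ (mem_univ j)]
  rw [div_eq_mul_inv]
  ring

lemma secf_base_tendsto {m : ℕ} (ρ : ℝ) (lam z : Fin m → ℝ) (hlam : Function.Injective lam)
    (j : Fin m) {l : Filter ℝ} (hl : l ≤ 𝓝 (lam j)) :
    Tendsto (fun μ => 1 + ρ * ∑ i ∈ univ.erase j, z i ^ 2 / (lam i - μ)) l
      (𝓝 (1 + ρ * ∑ i ∈ univ.erase j, z i ^ 2 / (lam i - lam j))) := by
  refine Tendsto.mono_left ?_ hl
  refine (continuousAt_const.add (continuousAt_const.mul ?_))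
  refine tendsto_finset_sum _ fun i hi => ?_
  have hne : lam i ≠ lam j := fun h => (Finset.mem_erase.1 hi).1 (hlam h)
  exact continuousAt_const.div (continuous_const.sub continuous_id).continuousAt
    (sub_ne_zero.2 hne)

lemma secf_tendsto_atBot_aux {m : ℕ} (ρ : ℝ) (lam z : Fin m → ℝ) (hlam : Function.Injective lam)
    (j : Fin m) {l : Filter ℝ} (hl : l ≤ 𝓝 (lam j))
    (hmul : Tendsto (fun μ => (ρ * z j ^ 2) * (lam j - μ)⁻¹) l atBot) :
    Tendsto (secf ρ lam z) l atBot := by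
  have hb := secf_base_tendsto ρ lam z hlam j hl
  have := tendsto_atBot_add_left_of_ge' l _ (hb.eventually_le_const (lt_add_one _)) hmul
  exact this.congr fun μ => (secf_split ρ lam z j μ).symm

lemma secf_tendsto_atTop_aux {m : ℕ} (ρ : ℝ) (lam z : Fin m → ℝ) (hlam : Function.Injective lam)
    (j : Fin m) {l : Filter ℝ} (hl : l ≤ 𝓝 (lam j))
    (hmul : Tendsto (fun μ => (ρ * z j ^ 2) * (lam j - μ)⁻¹) l atTop) :
    Tendsto (secf ρ lam z) l atTop := by
  have hb := secf_base_tendsto ρ lam z hlam j hl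
  have := tendsto_atTop_add_left_of_le' l _ (hb.eventually_const_le (sub_one_lt _)) hmul
  exact this.congr fun μ => (secf_split ρ lam z j μ).symm

lemma secf_tendsto_infty {m : ℕ} (ρ : ℝ) (lam z : Fin m → ℝ) {l : Filter ℝ}
    (hl : Tendsto (fun μ : ℝ => μ) l atTop ∨ Tendsto (fun μ : ℝ => μ) l atBot) :
    Tendsto (secf ρ lam z) l (𝓝 1) := by
  have hterm : ∀ i : Fin m, Tendsto (fun μ => z i ^ 2 / (lam i - μ)) l (𝓝 0) := by
    intro i
    have h1 : Tendsto (fun μ : ℝ => lam i - μ) l atBot ∨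
        Tendsto (fun μ : ℝ => lam i - μ) l atTop := by
      rcases hl with h | h
      · exact Or.inl (tendsto_atBot_add_const_left l (lam i)
          (tendsto_neg_atTop_atBot.comp h) |>.congr fun x => by simp [Function.comp, sub_eq_add_neg])
      · exact Or.inr (tendsto_atTop_add_const_left l (lam i)
          (tendsto_neg_atBot_atTop.comp h) |>.congr fun x => by simp [Function.comp, sub_eq_add_neg])
    have h2 : Tendsto (fun μ : ℝ => (lam i - μ)⁻¹) l (𝓝 0) := by
      rcases h1 with h | h
      · have h2 := (tendsto_inv_atTop_zero.comp (tendsto_neg_atBot_atTop.comp h)).neg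
        rw [neg_zero] at h2
        exact h2.congr fun x => by
          simp only [Function.comp_apply, neg_sub]
          rw [eq_comm, ← neg_sub x (lam i), inv_neg]
      · exact tendsto_inv_atTop_zero.comp h
    have := h2.const_mul (z i ^ 2)
    rw [mul_zero] at this
    exact this.congr fun x => (div_eq_mul_inv _ _).symm
  have hsum : Tendsto (fun μ => ∑ i, z i ^ 2 / (lam i - μ)) l (𝓝 0) := by
    have := tendsto_finset_sum (univ : Finset (Fin m)) fun i _ => hterm i
    rwa [Finset.sum_const_zero] at this
  have : Tendsto (fun μ => 1 + ρ * ∑ i, z i ^ 2 / (lam i - μ)) l (𝓝 (1 + ρ * 0)) :=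
    tendsto_const_nhds.add (tendsto_const_nhds.mul hsum)
  rw [mul_zero, add_zero] at this
  exact this

lemma exists_secular_roots {m : ℕ} (lam z : Fin (m+1) → ℝ) (hlam : StrictMono lam)
    (ρ : ℝ) (hρ : ρ ≠ 0) (hz : ∀ i, z i ≠ 0) :
    ∃ t : Fin (m+1) → ℝ, StrictMono t ∧ (∀ j i, t j ≠ lam i) ∧
      ∀ j, secf ρ lam z (t j) = 0 := by
  have hinj : Function.Injective lam := hlam.injective
  rcases hρ.lt_or_gt with hneg | hpos
  · -- ρ < 0
    have hcneg : ∀ j : Fin (m+1), ρ * z j ^ 2 < 0 := fun j =>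
      mul_neg_of_neg_of_pos hneg (lt_of_le_of_ne (sq_nonneg _) (Ne.symm (pow_ne_zero 2 (hz j))))
    have hTopR : ∀ j, Tendsto (secf ρ lam z) (𝓝[>] (lam j)) atTop := fun j =>
      secf_tendsto_atTop_aux ρ lam z hinj j nhdsWithin_le_nhds
        ((tendsto_const_mul_atTop_of_neg (hcneg j)).2 (pole_right (lam j)))
    have hBotL : ∀ j, Tendsto (secf ρ lam z) (𝓝[<] (lam j)) atBot := fun j =>
      secf_tendsto_atBot_aux ρ lam z hinj j nhdsWithin_le_nhds
        ((tendsto_const_mul_atBot_of_neg (hcneg j)).2 (pole_left (lam j)))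
    have key : ∀ j : Fin (m+1), ∃ r, r < lam j ∧ (∀ i, i < j → lam i < r) ∧
        secf ρ lam z r = 0 := by
      intro j
      by_cases hj : 0 < (j : ℕ)
      · have hjprev : (j : ℕ) - 1 < m + 1 := by omega
        set j' : Fin (m+1) := ⟨(j:ℕ) - 1, hjprev⟩ with hj'def
        have hj'j : j' < j := by rw [Fin.lt_def]; simp only [hj'def]; omega
        have hjj' : lam j' < lam j := hlam hj'j
        have hmemq : ∀ᶠ x in 𝓝[>] (lam j'), x ∈ Set.Ioo (lam j') (lam j) :=
          eventually_mem_set.2 (Ioo_mem_nhdsGT hjj')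
        obtain ⟨q, hq, hq0⟩ :=
          (hmemq.and ((hTopR j').eventually (eventually_gt_atTop 0))).exists
        have hmemp : ∀ᶠ x in 𝓝[<] (lam j), x ∈ Set.Ioo q (lam j) :=
          eventually_mem_set.2 (Ioo_mem_nhdsLT hq.2)
        obtain ⟨p, hp, hp0⟩ :=
          (hmemp.and ((hBotL j).eventually (eventually_lt_atBot 0))).exists
        have hpIoo : p ∈ Set.Ioo (lam j') (lam j) := ⟨hq.1.trans hp.1, hp.2⟩
        have hcont : ContinuousOn (secf ρ lam z) (Set.Ioo (lam j') (lam j)) := by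
          intro x hx
          refine (secf_continuousAt ρ lam z ?_).continuousWithinAt
          intro i
          rcases lt_or_ge i j with hij | hij
          · have hii : i ≤ j' := by
              rw [Fin.le_def]; rw [Fin.lt_def] at hij; simp only [hj'def]; omega
            exact ne_of_lt (lt_of_le_of_lt (hlam.monotone hii) hx.1)
          · exact ne_of_gt (lt_of_lt_of_le hx.2 (hlam.monotone hij))
        obtain ⟨r, hr, hr0⟩ := ivt_root hpIoo hq hp0 hq0 hcont
        refine ⟨r, hr.2, fun i hi => ?_, hr0⟩
        have hii : i ≤ j' := by
          rw [Fin.le_def]; rw [Fin.lt_def] at hi; simp only [hj'def]; omega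
        exact lt_of_le_of_lt (hlam.monotone hii) hr.1
      · have hnot : ∀ i : Fin (m+1), ¬ i < j := by
          intro i hi; rw [Fin.lt_def] at hi; omega
        have hT : Tendsto (secf ρ lam z) atBot (𝓝 1) :=
          secf_tendsto_infty ρ lam z (Or.inr tendsto_id)
        obtain ⟨q, hq0, hqlt⟩ := ((hT.eventually (eventually_gt_nhds (by norm_num : (0:ℝ) < 1))).and
          (eventually_lt_atBot (lam j))).exists
        have hmemp : ∀ᶠ x in 𝓝[<] (lam j), x ∈ Set.Ioo q (lam j) :=
          eventually_mem_set.2 (Ioo_mem_nhdsLT hqlt)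
        obtain ⟨p, hp, hp0⟩ :=
          (hmemp.and ((hBotL j).eventually (eventually_lt_atBot 0))).exists
        have hq1 : q ∈ Set.Ioo (q - 1) (lam j) := ⟨by linarith, hqlt⟩
        have hp1 : p ∈ Set.Ioo (q - 1) (lam j) := ⟨by have := hp.1; linarith, hp.2⟩
        have hcont : ContinuousOn (secf ρ lam z) (Set.Ioo (q - 1) (lam j)) := by
          intro x hx
          refine (secf_continuousAt ρ lam z ?_).continuousWithinAt
          intro i
          have hji : j ≤ i := by rw [Fin.le_def]; omega
          exact ne_of_gt (lt_of_lt_of_le hx.2 (hlam.monotone hji))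
        obtain ⟨r, hr, hr0⟩ := ivt_root hp1 hq1 hp0 hq0 hcont
        exact ⟨r, hr.2, fun i hi => absurd hi (hnot i), hr0⟩
    choose r h1 h2 h3 using key
    refine ⟨r, ?_, ?_, h3⟩
    · intro j j' hjj'
      exact lt_trans (h1 j) (h2 j' j hjj')
    · intro j i
      rcases lt_or_ge i j with hij | hij
      · exact ne_of_gt (h2 j i hij)
      · exact ne_of_lt (lt_of_lt_of_le (h1 j) (hlam.monotone hij))
  · -- ρ > 0
    have hcpos : ∀ j : Fin (m+1), 0 < ρ * z j ^ 2 := fun j =>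
      mul_pos hpos (lt_of_le_of_ne (sq_nonneg _) (Ne.symm (pow_ne_zero 2 (hz j))))
    have hBotR : ∀ j, Tendsto (secf ρ lam z) (𝓝[>] (lam j)) atBot := fun j =>
      secf_tendsto_atBot_aux ρ lam z hinj j nhdsWithin_le_nhds
        ((pole_right (lam j)).const_mul_atBot (hcpos j))
    have hTopL : ∀ j, Tendsto (secf ρ lam z) (𝓝[<] (lam j)) atTop := fun j =>
      secf_tendsto_atTop_aux ρ lam z hinj j nhdsWithin_le_nhds
        ((pole_left (lam j)).const_mul_atTop (hcpos j))
    have key : ∀ j : Fin (m+1), ∃ r, lam j < r ∧ (∀ i, j < i → r < lam i) ∧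
        secf ρ lam z r = 0 := by
      intro j
      by_cases hj : (j : ℕ) + 1 < m + 1
      · set j' : Fin (m+1) := ⟨(j:ℕ) + 1, hj⟩ with hj'def
        have hjj'lt : j < j' := by rw [Fin.lt_def]; simp only [hj'def]; omega
        have hjj' : lam j < lam j' := hlam hjj'lt
        have hmemq : ∀ᶠ x in 𝓝[<] (lam j'), x ∈ Set.Ioo (lam j) (lam j') :=
          eventually_mem_set.2 (Ioo_mem_nhdsLT hjj')
        obtain ⟨q, hq, hq0⟩ :=
          (hmemq.and ((hTopL j').eventually (eventually_gt_atTop 0))).exists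
        have hmemp : ∀ᶠ x in 𝓝[>] (lam j), x ∈ Set.Ioo (lam j) q :=
          eventually_mem_set.2 (Ioo_mem_nhdsGT hq.1)
        obtain ⟨p, hp, hp0⟩ :=
          (hmemp.and ((hBotR j).eventually (eventually_lt_atBot 0))).exists
        have hpIoo : p ∈ Set.Ioo (lam j) (lam j') := ⟨hp.1, hp.2.trans hq.2⟩
        have hcont : ContinuousOn (secf ρ lam z) (Set.Ioo (lam j) (lam j')) := by
          intro x hx
          refine (secf_continuousAt ρ lam z ?_).continuousWithinAt
          intro i
          rcases le_or_gt i j with hij | hij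
          · exact ne_of_lt (lt_of_le_of_lt (hlam.monotone hij) hx.1)
          · have hii : j' ≤ i := by
              rw [Fin.le_def]; rw [Fin.lt_def] at hij; simp only [hj'def]; omega
            exact ne_of_gt (lt_of_lt_of_le hx.2 (hlam.monotone hii))
        obtain ⟨r, hr, hr0⟩ := ivt_root hpIoo hq hp0 hq0 hcont
        refine ⟨r, hr.1, fun i hi => ?_, hr0⟩
        have hii : j' ≤ i := by
          rw [Fin.le_def]; rw [Fin.lt_def] at hi; simp only [hj'def]; omega
        exact lt_of_lt_of_le hr.2 (hlam.monotone hii)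
      · have hnot : ∀ i : Fin (m+1), ¬ j < i := by
          intro i hi; rw [Fin.lt_def] at hi; have := i.isLt; omega
        have hT : Tendsto (secf ρ lam z) atTop (𝓝 1) :=
          secf_tendsto_infty ρ lam z (Or.inl tendsto_id)
        obtain ⟨q, hq0, hqgt⟩ := ((hT.eventually (eventually_gt_nhds (by norm_num : (0:ℝ) < 1))).and
          (eventually_gt_atTop (lam j))).exists
        have hmemp : ∀ᶠ x in 𝓝[>] (lam j), x ∈ Set.Ioo (lam j) q :=
          eventually_mem_set.2 (Ioo_mem_nhdsGT hqgt)
        obtain ⟨p, hp, hp0⟩ :=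
          (hmemp.and ((hBotR j).eventually (eventually_lt_atBot 0))).exists
        have hq1 : q ∈ Set.Ioo (lam j) (q + 1) := ⟨hqgt, lt_add_one q⟩
        have hp1 : p ∈ Set.Ioo (lam j) (q + 1) := ⟨hp.1, hp.2.trans (lt_add_one q)⟩
        have hcont : ContinuousOn (secf ρ lam z) (Set.Ioo (lam j) (q + 1)) := by
          intro x hx
          refine (secf_continuousAt ρ lam z ?_).continuousWithinAt
          intro i
          have hij : i ≤ j := by rw [Fin.le_def]; have := i.isLt; omega
          exact ne_of_lt (lt_of_le_of_lt (hlam.monotone hij) hx.1)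
        obtain ⟨r, hr, hr0⟩ := ivt_root hp1 hq1 hp0 hq0 hcont
        exact ⟨r, hr.1, fun i hi => absurd hi (hnot i), hr0⟩
    choose r h1 h2 h3 using key
    refine ⟨r, ?_, ?_, h3⟩
    · intro j j' hjj'
      exact lt_trans (h2 j j' hjj') (h1 j')
    · intro j i
      rcases le_or_gt i j with hij | hij
      · exact ne_of_gt (lt_of_le_of_lt (hlam.monotone hij) (h1 j))
      · exact ne_of_lt (h2 j i hij)

/-- Rank-one update setting, generic assumptions, `ρ ≠ 0`: no eigenvalue of
`L̃ = L + ρ v vᵀ` equals any `λ_i`; `L̃` has pairwise distinct eigenvalues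
`λ̃_1 < … < λ̃_n`; and, setting `w_j = (diag(λ) - λ̃_j I)⁻¹ z` and
`ũ_j = U w_j / ‖w_j‖₂`, the `ũ_j` form an orthonormal eigenbasis of `L̃`.
Equivalently, `Ũᵀ = diag(s) C̄(λ̃, λ) diag(t) Uᵀ` with `s_j = -1/‖w_j‖₂`,
`t_i = z_i`, and `C̄_{ji} = 1/(λ̃_j - λ_i)`. -/
theorem rank_one_update_eigenbasis_cauchy
    {n : ℕ} (L U : Matrix (Fin (n + 1)) (Fin (n + 1)) ℝ)
    (lam : Fin (n + 1) → ℝ)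
    (hU : Uᵀ * U = 1)
    (hLd : L = U * Matrix.diagonal lam * Uᵀ)
    (hlam : StrictMono lam)
    (ρ : ℝ) (hρ : ρ ≠ 0) (v : Fin (n + 1) → ℝ)
    (z : Fin (n + 1) → ℝ) (hz_def : z = Uᵀ.mulVec v)
    (hz : ∀ i, z i ≠ 0) :
    ∃ (tlam : Fin (n + 1) → ℝ) (tu : Fin (n + 1) → Fin (n + 1) → ℝ),
      StrictMono tlam ∧
      (∀ j i, tlam j ≠ lam i) ∧
      (∀ μ : ℝ,
        (∃ x : Fin (n + 1) → ℝ, x ≠ 0 ∧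
            (L + ρ • vecMulVec v v).mulVec x = μ • x) ↔ ∃ j, μ = tlam j) ∧
      (∀ j, tu j
          = (Real.sqrt (∑ i, (z i / (lam i - tlam j)) ^ 2))⁻¹ •
              U.mulVec (fun i => z i / (lam i - tlam j))) ∧
      (∀ j, (L + ρ • vecMulVec v v).mulVec (tu j) = tlam j • tu j) ∧
      (∀ j j', tu j ⬝ᵥ tu j' = if j = j' then 1 else 0) ∧
      Matrix.of (fun j i => tu j i)
        = Matrix.diagonal
              (fun j => -(Real.sqrt (∑ i, (z i / (lam i - tlam j)) ^ 2))⁻¹)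
            * Matrix.of (fun j i => (tlam j - lam i)⁻¹)
            * Matrix.diagonal z * Uᵀ := by
  obtain ⟨tlam, hmono, hne, hroot⟩ := exists_secular_roots lam z hlam ρ hρ hz
  have hUU : U * Uᵀ = 1 := mul_eq_one_comm.mp hU
  have hv : U.mulVec z = v := by
    rw [hz_def, Matrix.mulVec_mulVec, hUU, Matrix.one_mulVec]
  set w : Fin (n+1) → Fin (n+1) → ℝ := fun j i => z i / (lam i - tlam j) with hw
  set nw : Fin (n+1) → ℝ := fun j => Real.sqrt (∑ i, (z i / (lam i - tlam j)) ^ 2) with hnw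
  set tu : Fin (n+1) → Fin (n+1) → ℝ := fun j => (nw j)⁻¹ • U.mulVec (w j) with htu
  have hden : ∀ j i, lam i - tlam j ≠ 0 := fun j i => sub_ne_zero.2 (Ne.symm (hne j i))
  have hsum_pos : ∀ j, 0 < ∑ i, (z i / (lam i - tlam j)) ^ 2 := by
    intro j
    refine Finset.sum_pos' (fun i _ => sq_nonneg _) ⟨0, Finset.mem_univ 0, ?_⟩
    have h0 : z 0 / (lam 0 - tlam j) ≠ 0 := div_ne_zero (hz 0) (hden j 0)
    exact lt_of_le_of_ne (sq_nonneg _) (Ne.symm (pow_ne_zero 2 h0))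
  have hnwpos : ∀ j, 0 < nw j := fun j => Real.sqrt_pos.2 (hsum_pos j)
  have hnwsq : ∀ j, nw j ^ 2 = ∑ i, (z i / (lam i - tlam j)) ^ 2 := fun j =>
    Real.sq_sqrt (hsum_pos j).le
  have hS : ∀ μ : ℝ, secf ρ lam z μ = 0 → ρ * ∑ i, z i ^ 2 / (lam i - μ) = -1 := by
    intro μ h; unfold secf at h; linarith
  -- orthogonality of coefficient vectors of distinct roots
  have horth : ∀ μ μ' : ℝ, μ ≠ μ' → (∀ i, lam i ≠ μ) → (∀ i, lam i ≠ μ') →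
      secf ρ lam z μ = 0 → secf ρ lam z μ' = 0 →
      (fun i => z i / (lam i - μ)) ⬝ᵥ (fun i => z i / (lam i - μ')) = 0 := by
    intro μ μ' hμμ hpol hpol' h h'
    have key : ∀ i : Fin (n+1), (z i / (lam i - μ)) * (z i / (lam i - μ'))
        = (μ - μ')⁻¹ * (z i ^ 2 / (lam i - μ) - z i ^ 2 / (lam i - μ')) := by
      intro i
      have h1 : lam i - μ ≠ 0 := sub_ne_zero.2 (hpol i)
      have h2 : lam i - μ' ≠ 0 := sub_ne_zero.2 (hpol' i)
      have h3 : μ - μ' ≠ 0 := sub_ne_zero.2 hμμ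
      field_simp
      ring
    simp only [dotProduct]
    rw [Finset.sum_congr rfl fun i _ => key i, ← Finset.mul_sum, Finset.sum_sub_distrib]
    have hSS : ∑ i, z i ^ 2 / (lam i - μ) = ∑ i, z i ^ 2 / (lam i - μ') :=
      mul_left_cancel₀ hρ (by rw [hS μ h, hS μ' h'])
    rw [hSS, sub_self, mul_zero]
  -- dot products through U
  have hUdot : ∀ a b : Fin (n+1) → ℝ, (U.mulVec a) ⬝ᵥ (U.mulVec b) = a ⬝ᵥ b := by
    intro a b
    rw [Matrix.dotProduct_mulVec, Matrix.vecMul_mulVec, hU, Matrix.vecMul_one]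
  have hUinj : ∀ a b : Fin (n+1) → ℝ, U.mulVec a = U.mulVec b → a = b := by
    intro a b h
    have h2 := congrArg (fun t => Uᵀ.mulVec t) h
    simpa [Matrix.mulVec_mulVec, hU, Matrix.one_mulVec] using h2
  -- z ⬝ᵥ w j
  have hzw : ∀ μ : ℝ, z ⬝ᵥ (fun i => z i / (lam i - μ)) = ∑ i, z i ^ 2 / (lam i - μ) := by
    intro μ
    simp only [dotProduct]
    exact Finset.sum_congr rfl fun i _ => by rw [sq]; ring
  -- diagonal eigen equation
  have hMw : ∀ j, (Matrix.diagonal lam).mulVec (w j) + (ρ * (z ⬝ᵥ w j)) • z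
      = tlam j • w j := by
    intro j
    funext i
    have hd := hden j i
    simp only [Pi.add_apply, Pi.smul_apply, smul_eq_mul, Matrix.mulVec_diagonal, hw]
    rw [hzw (tlam j), hS (tlam j) (hroot j)]
    field_simp
    ring
  -- rank-one action
  have hvvx : ∀ x : Fin (n+1) → ℝ, (vecMulVec v v).mulVec x = (v ⬝ᵥ x) • v := by
    intro x
    funext i
    simp only [Matrix.mulVec, dotProduct, Matrix.vecMulVec_apply, Pi.smul_apply, smul_eq_mul]
    rw [Finset.sum_mul]
    exact Finset.sum_congr rfl fun k _ => by ring
  have hLU : ∀ x : Fin (n+1) → ℝ,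
      L.mulVec (U.mulVec x) = U.mulVec ((Matrix.diagonal lam).mulVec x) := by
    intro x
    rw [hLd, Matrix.mulVec_mulVec, Matrix.mulVec_mulVec]
    congr 1
    rw [Matrix.mul_assoc (U * Matrix.diagonal lam) Uᵀ U, hU, Matrix.mul_one]
  have hvdot : ∀ x : Fin (n+1) → ℝ, v ⬝ᵥ (U.mulVec x) = z ⬝ᵥ x := by
    intro x
    rw [Matrix.dotProduct_mulVec, ← Matrix.mulVec_transpose, ← hz_def]
  set Lt := L + ρ • vecMulVec v v with hLt
  have hLtU : ∀ a : Fin (n+1) → ℝ,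
      Lt.mulVec (U.mulVec a)
        = U.mulVec ((Matrix.diagonal lam).mulVec a + (ρ * (z ⬝ᵥ a)) • z) := by
    intro a
    rw [hLt, Matrix.add_mulVec, Matrix.smul_mulVec, hvvx, hLU, hvdot, ← hv,
      smul_smul, ← Matrix.mulVec_smul, ← Matrix.mulVec_add]
  have hLtw : ∀ j, Lt.mulVec (U.mulVec (w j)) = tlam j • (U.mulVec (w j)) := by
    intro j
    rw [hLtU (w j), hMw j, Matrix.mulVec_smul]
  have htu_eig : ∀ j, Lt.mulVec (tu j) = tlam j • tu j := by
    intro j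
    rw [htu]
    simp only
    rw [Matrix.mulVec_smul, hLtw j, smul_comm]
  -- orthonormality
  have hwdot : ∀ j j', w j ⬝ᵥ w j' = if j = j' then nw j ^ 2 else 0 := by
    intro j j'
    by_cases hjj : j = j'
    · subst hjj
      rw [if_pos rfl, hnwsq]
      simp only [dotProduct, hw]
      exact Finset.sum_congr rfl fun i _ => (sq _).symm
    · rw [if_neg hjj]
      exact horth (tlam j) (tlam j') (fun h => hjj (hmono.injective h))
        (fun i => (hne j i).symm) (fun i => (hne j' i).symm) (hroot j) (hroot j')
  have htu_dot : ∀ j j', tu j ⬝ᵥ tu j' = if j = j' then 1 else 0 := by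
    intro j j'
    rw [htu]
    simp only
    rw [smul_dotProduct, dotProduct_smul, hUdot, hwdot]
    by_cases hjj : j = j'
    · subst hjj
      rw [if_pos rfl, if_pos rfl]
      have hnz := (hnwpos j).ne'
      rw [smul_eq_mul, smul_eq_mul, sq]
      field_simp
    · rw [if_neg hjj, if_neg hjj, smul_zero, smul_zero]
  -- the eigenvalue characterization
  have hiff : ∀ μ : ℝ,
      (∃ x : Fin (n+1) → ℝ, x ≠ 0 ∧ Lt.mulVec x = μ • x) ↔ ∃ j, μ = tlam j := by
    intro μ
    constructor
    · rintro ⟨x, hx0, hxe⟩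
      set y := Uᵀ.mulVec x with hy
      have hxy : U.mulVec y = x := by
        rw [hy, Matrix.mulVec_mulVec, hUU, Matrix.one_mulVec]
      have hy0 : y ≠ 0 := by
        intro h
        apply hx0
        rw [← hxy, h, Matrix.mulVec_zero]
      have heq' : (Matrix.diagonal lam).mulVec y + (ρ * (z ⬝ᵥ y)) • z = μ • y := by
        apply hUinj
        rw [← hLtU y, hxy, hxe, ← hxy, Matrix.mulVec_smul]
      set c := ρ * (z ⬝ᵥ y) with hc_def
      have hcomp : ∀ i, lam i * y i + c * z i = μ * y i := by
        intro i
        have := congrFun heq' i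
        simpa [Matrix.mulVec_diagonal] using this
      by_cases hc : c = 0
      · exfalso
        obtain ⟨i0, hi0⟩ := Function.ne_iff.1 hy0
        have hμ : μ = lam i0 := by
          have h := hcomp i0
          rw [hc, zero_mul, add_zero] at h
          exact (mul_right_cancel₀ hi0 h).symm
        have hyzero : ∀ i, i ≠ i0 → y i = 0 := by
          intro i hii0
          have h := hcomp i
          rw [hc, zero_mul, add_zero, hμ] at h
          have hlne : lam i ≠ lam i0 := fun hh => hii0 (hlam.injective hh)
          have h2 : (lam i - lam i0) * y i = 0 := by linarith
          rcases mul_eq_zero.1 h2 with h' | h'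
          · exact absurd (sub_eq_zero.1 h') hlne
          · exact h'
        have hzy : z ⬝ᵥ y = z i0 * y i0 := by
          simp only [dotProduct]
          rw [Finset.sum_eq_single i0]
          · intro b _ hb
            rw [hyzero b hb, mul_zero]
          · intro h
            exact absurd (Finset.mem_univ i0) h
        have h3 : z i0 * y i0 = 0 := by
          have h4 : ρ * (z ⬝ᵥ y) = 0 := hc
          rw [hzy] at h4
          exact (mul_eq_zero.1 h4).resolve_left hρ
        exact (mul_ne_zero (hz i0) hi0) h3
      · have hμpole : ∀ i, lam i ≠ μ := by
          intro i hli
          have h := hcomp i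
          rw [hli] at h
          have h2 : c * z i = 0 := by linarith
          exact (mul_ne_zero hc (hz i)) h2
        have hyi : ∀ i, y i = (-c) * (z i / (lam i - μ)) := by
          intro i
          have h := hcomp i
          have hd : lam i - μ ≠ 0 := sub_ne_zero.2 (hμpole i)
          field_simp
          linarith
        have hfμ : secf ρ lam z μ = 0 := by
          have hzy : z ⬝ᵥ y = (-c) * ∑ i, z i ^ 2 / (lam i - μ) := by
            simp only [dotProduct]
            rw [Finset.mul_sum]
            refine Finset.sum_congr rfl fun i _ => ?_
            have hsq : z i ^ 2 / (lam i - μ) = z i * (z i / (lam i - μ)) := by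
              rw [sq, mul_div_assoc]
            rw [hyi i, hsq]
            ring
          have hc2 : c = ρ * ((-c) * ∑ i, z i ^ 2 / (lam i - μ)) := by
            rw [← hzy]
          have h5 : c * (1 + ρ * ∑ i, z i ^ 2 / (lam i - μ)) = 0 := by
            linear_combination hc2
          unfold secf
          exact (mul_eq_zero.1 h5).resolve_left hc
        by_contra hno
        push_neg at hno
        set F : Option (Fin (n+1)) → (Fin (n+1) → ℝ) :=
          fun o => o.elim (fun i => z i / (lam i - μ)) w with hF
        have hFne : ∀ o, F o ≠ 0 := by
          intro o h
          match o with
          | none =>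
            have := congrFun h 0
            exact div_ne_zero (hz 0) (sub_ne_zero.2 (hμpole 0)) (by simpa [hF] using this)
          | some j =>
            have := congrFun h 0
            exact div_ne_zero (hz 0) (hden j 0) (by simpa [hF, hw] using this)
        have hFdot : ∀ o o', o ≠ o' → F o ⬝ᵥ F o' = 0 := by
          intro o o' hoo
          match o, o' with
          | none, none => exact absurd rfl hoo
          | none, some j =>
            exact horth μ (tlam j) (fun h => (hno j) h) hμpole
              (fun i => (hne j i).symm) hfμ (hroot j)
          | some j, none =>
            exact horth (tlam j) μ (fun h => (hno j) h.symm)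
              (fun i => (hne j i).symm) hμpole (hroot j) hfμ
          | some j, some j' =>
            have hjj : j ≠ j' := fun h => hoo (by rw [h])
            exact horth (tlam j) (tlam j') (fun h => hjj (hmono.injective h))
              (fun i => (hne j i).symm) (fun i => (hne j' i).symm) (hroot j) (hroot j')
        have hLI : LinearIndependent ℝ F := by
          rw [Fintype.linearIndependent_iff]
          intro g hg k
          have hdot := congrArg (fun t => t ⬝ᵥ F k) hg
          simp only [zero_dotProduct] at hdot
          have hexp : (∑ o, g o • F o) ⬝ᵥ F k = ∑ o, g o * (F o ⬝ᵥ F k) := by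
            simp only [dotProduct, Finset.sum_apply, Pi.smul_apply, smul_eq_mul,
              Finset.sum_mul, Finset.mul_sum]
            rw [Finset.sum_comm]
            exact Finset.sum_congr rfl fun o _ => Finset.sum_congr rfl fun i _ => by ring
          rw [hexp] at hdot
          rw [Finset.sum_eq_single k (fun o _ ho => by rw [hFdot o k ho, mul_zero])
            (fun h => absurd (Finset.mem_univ k) h)] at hdot
          have hFk : F k ⬝ᵥ F k ≠ 0 := fun h => hFne k (dotProduct_self_eq_zero.1 h)
          exact (mul_eq_zero.1 hdot).resolve_right hFk
        have hcard := hLI.fintype_card_le_finrank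
        rw [Module.finrank_pi] at hcard
        simp [Fintype.card_option] at hcard
    · rintro ⟨j, rfl⟩
      refine ⟨tu j, ?_, htu_eig j⟩
      intro h
      have h1 := htu_dot j j
      rw [h, if_pos rfl, zero_dotProduct] at h1
      exact zero_ne_one h1
  -- the matrix identity
  have hmat : Matrix.of (fun j i => tu j i)
      = Matrix.diagonal (fun j => -(nw j)⁻¹)
          * Matrix.of (fun j i => (tlam j - lam i)⁻¹)
          * Matrix.diagonal z * Uᵀ := by
    ext j i
    rw [Matrix.of_apply, Matrix.mul_apply]
    have hRterm : ∀ k, (Matrix.diagonal (fun j => -(nw j)⁻¹)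
        * Matrix.of (fun j i => (tlam j - lam i)⁻¹) * Matrix.diagonal z) j k
        = -(nw j)⁻¹ * (tlam j - lam k)⁻¹ * z k := by
      intro k
      rw [Matrix.mul_diagonal, Matrix.diagonal_mul, Matrix.of_apply]
    rw [Finset.sum_congr rfl fun k _ => by rw [hRterm k]]
    show ((nw j)⁻¹ • (U.mulVec (w j))) i = _
    simp only [Pi.smul_apply, smul_eq_mul, Matrix.mulVec, dotProduct]
    rw [Finset.mul_sum]
    refine Finset.sum_congr rfl fun k _ => ?_
    rw [Matrix.transpose_apply]
    have hd := hden j k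
    have hflip : (tlam j - lam k)⁻¹ = -(lam k - tlam j)⁻¹ := by
      rw [← neg_sub, inv_neg]
    rw [hflip, hw]
    simp only
    field_simp
  exact ⟨tlam, tu, hmono, hne, hiff, fun j => rfl, htu_eig, htu_dot, hmat⟩
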